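/- For all Φ, T > 0, the partial derivative of B(Φ,T) = T·√(1 − (Φ/(Φ+T))²) with respect to Φ satisfies |∂B/∂Φ| ≤ 1/2. -/

import Mathlib

theorem abs_partial_deriv_B_wrt_Phi_le_half
    (B : ℝ → ℝ → ℝ)
    (hB : ∀ Φ T : ℝ, B Φ T = T * Real.sqrt (1 - (Φ / (Φ + T))^2)) :
    ∀ Φ T : ℝ, 0 < Φ → 0 < T →
      |deriv (fun φ => B φ T) Φ| ≤ 1/2 := by
  intro Φ T hΦ hT
  set g : ℝ → ℝ := fun φ => T * Real.sqrt (T * (T + 2 * φ)) / (φ + T) with hg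
  have hPT : 0 < Φ + T := by linarith
  -- B · T = g eventually near Φ
  have heq : (fun φ => B φ T) =ᶠ[nhds Φ] g := by
    filter_upwards [eventually_gt_nhds hΦ] with φ hφ
    have hφT : 0 < φ + T := by linarith
    rw [hB, hg]
    have h1 : 1 - (φ / (φ + T))^2 = T * (T + 2 * φ) / (φ + T)^2 := by
      field_simp; ring
    rw [h1, Real.sqrt_div (by positivity), Real.sqrt_sq hφT.le]; ring
  rw [heq.deriv_eq]
  -- compute the derivative of g
  have hu : 0 < T * (T + 2 * Φ) := by positivity
  set s := Real.sqrt (T * (T + 2 * Φ)) with hs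
  have hspos : 0 < s := Real.sqrt_pos.mpr hu
  have hssq : s ^ 2 = T * (T + 2 * Φ) := Real.sq_sqrt hu.le
  have h1 : HasDerivAt (fun φ : ℝ => T * (T + 2 * φ)) (T * 2) Φ := by
    have : HasDerivAt (fun φ : ℝ => T * (T + 2 * φ)) (T * (2 * 1)) Φ :=
      (((hasDerivAt_id Φ).const_mul 2).const_add T).const_mul T
    simpa using this
  have h2 : HasDerivAt (fun φ : ℝ => Real.sqrt (T * (T + 2 * φ))) (T * 2 / (2 * s)) Φ :=
    h1.sqrt hu.ne'
  have h3 : HasDerivAt (fun φ : ℝ => φ + T) 1 Φ := (hasDerivAt_id Φ).add_const T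
  have h4 : HasDerivAt g
      ((T * (T * 2 / (2 * s)) * (Φ + T) - T * s * 1) / (Φ + T) ^ 2) Φ :=
    ((h2.const_mul T).div h3 hPT.ne')
  rw [h4.deriv]
  have hval : (T * (T * 2 / (2 * s)) * (Φ + T) - T * s * 1) / (Φ + T) ^ 2
      = -(T ^ 2 * Φ) / (s * (Φ + T) ^ 2) := by
    field_simp
    linear_combination (-1) * hssq
  rw [hval, abs_div, abs_neg, abs_of_nonneg (by positivity : (0:ℝ) ≤ T ^ 2 * Φ),
    abs_of_pos (by positivity : (0:ℝ) < s * (Φ + T) ^ 2),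
    div_le_iff₀ (by positivity : (0:ℝ) < s * (Φ + T) ^ 2)]
  -- need: T^2 Φ ≤ 1/2 * (s * (Φ+T)^2)
  have hsge : T ≤ s := by
    rw [hs]
    calc T = Real.sqrt (T ^ 2) := (Real.sqrt_sq hT.le).symm
    _ ≤ _ := Real.sqrt_le_sqrt (by nlinarith)
  nlinarith [sq_nonneg (Φ - T), mul_le_mul_of_nonneg_right hsge (sq_nonneg (Φ + T))]
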